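/- Suppose (Σ⁺, σ) is a topologically mixing one-sided countable Markov shift with property (BIP), f : Σ⁺ → ℝ is strictly positive, non-arithmetic, locally Hölder continuous, has a weak entropy gap at infinity, δ > d(f) is the unique constant with P(−δf) = 0, μ is a σ-invariant Gibbs state for −δf, and f̄ = ∫ f dμ satisfies 0 < f̄ < ∞. Then there exists G > 0 such that for every x ∈ Σ⁺ and every t > 0, Σ_{n≥1} Σ_{y : σ^n(y) = x} (1/n)·1_{{S_n f(y) ≤ t}}(y) ≤ G e^{tδ}/t. -/

import Mathlib

open scoped ENNReal NNReal
open Filter MeasureTheory Set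

namespace CMS

variable {A : Type*}

/-- The one-sided countable Markov shift space determined by transition matrix `T`. -/
def SigmaPlus (T : A → A → Prop) : Set (ℕ → A) :=
  {x | ∀ i, T (x i) (x (i + 1))}

/-- The shift map on `SigmaPlus T`. -/
def shift (T : A → A → Prop) (x : SigmaPlus T) : SigmaPlus T :=
  ⟨fun i => x.1 (i + 1), fun i => x.2 (i + 1)⟩

/-- Topological mixing. -/
def TopMixing (T : A → A → Prop) : Prop :=
  ∀ a b : A, ∃ N : ℕ, ∀ n ≥ N, ∃ x : SigmaPlus T, x.1 0 = a ∧ x.1 n = b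

/-- The big images and preimages property. -/
def BIP (T : A → A → Prop) : Prop :=
  ∃ B : Finset A, ∀ a : A, ∃ b₀ ∈ B, ∃ b₁ ∈ B, T b₀ a ∧ T a b₁

/-- Locally Hölder continuous. -/
def LocHolder (T : A → A → Prop) (f : SigmaPlus T → ℝ) : Prop :=
  ∃ C > (0 : ℝ), ∃ α > (0 : ℝ), ∀ n : ℕ, 1 ≤ n → ∀ x y : SigmaPlus T,
    (∀ i < n, x.1 i = y.1 i) → |f x - f y| ≤ C * Real.exp (-α * n)

/-- Birkhoff (ergodic) sum `S_n f`. -/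
noncomputable def birkhoff (T : A → A → Prop) (f : SigmaPlus T → ℝ) (n : ℕ)
    (x : SigmaPlus T) : ℝ :=
  ∑ i ∈ Finset.range n, f ((shift T)^[i] x)

/-- Points of period `n`: `Fix^n`. -/
def Mfix (T : A → A → Prop) (n : ℕ) : Set (SigmaPlus T) :=
  {x | (shift T)^[n] x = x}

/-- `S(f,a)`, the sup of `f` on the cylinder of the letter `a`. -/
noncomputable def Ssup (T : A → A → Prop) (f : SigmaPlus T → ℝ) (a : A) : ℝ :=
  sSup (f '' {x : SigmaPlus T | x.1 0 = a})

/-- `I(f,a)`, the inf of `f` on the cylinder of the letter `a`. -/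
noncomputable def Iinf (T : A → A → Prop) (f : SigmaPlus T → ℝ) (a : A) : ℝ :=
  sInf (f '' {x : SigmaPlus T | x.1 0 = a})

/-- The set of `s > 0` where `Z₁(f,s) = Σ_a e^{-s S(f,a)}` converges. -/
def convSet (T : A → A → Prop) (f : SigmaPlus T → ℝ) : Set ℝ :=
  {s | 0 < s ∧ Summable fun a : A => Real.exp (-s * Ssup T f a)}

/-- The critical exponent `d(f)` of `Z₁(f,·)`. -/
noncomputable def dcrit (T : A → A → Prop) (f : SigmaPlus T → ℝ) : ℝ :=
  sInf (convSet T f)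

/-- Eventually positive. -/
def EvPositive (T : A → A → Prop) (f : SigmaPlus T → ℝ) : Prop :=
  ∃ N : ℕ, ∃ B > (0 : ℝ), ∀ n ≥ N, ∀ x : SigmaPlus T, B < birkhoff T f n x

/-- Strictly positive: `inf f > 0`. -/
def StrictPositive (T : A → A → Prop) (f : SigmaPlus T → ℝ) : Prop :=
  ∃ c > (0 : ℝ), ∀ x : SigmaPlus T, c ≤ f x

/-- Non-arithmetic: the subgroup of `ℝ` generated by the periods is not cyclic. -/
def NonArithmetic (T : A → A → Prop) (f : SigmaPlus T → ℝ) : Prop :=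
  ¬ ∃ c : ℝ, ∀ n : ℕ, 1 ≤ n → ∀ x ∈ Mfix T n, ∃ m : ℤ, birkhoff T f n x = m * c

/-- Extended logarithm `ℝ≥0∞ → EReal`. -/
noncomputable def elog (x : ℝ≥0∞) : EReal :=
  if x = 0 then ⊥ else if x = ⊤ then ⊤ else ((Real.log x.toReal : ℝ) : EReal)

/-- The Gurevich partition sum `Z_n(f,a)` valued in `ℝ≥0∞`. -/
noncomputable def Zpart (T : A → A → Prop) (f : SigmaPlus T → ℝ) (a : A) (n : ℕ) : ℝ≥0∞ :=
  ∑' x : {x : SigmaPlus T // x ∈ Mfix T n ∧ x.1 0 = a},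
    ENNReal.ofReal (Real.exp (birkhoff T f n x))

/-- `p` is the Gurevich pressure of `f`. -/
def HasGurevichPressure (T : A → A → Prop) (f : SigmaPlus T → ℝ) (p : EReal) : Prop :=
  ∀ a : A, Tendsto (fun n : ℕ => (((n : ℝ)⁻¹ : ℝ) : EReal) * elog (Zpart T f a n))
    atTop (nhds p)

/-- `ℳ_f(n,t)`. -/
def Mset (T : A → A → Prop) (f : SigmaPlus T → ℝ) (n : ℕ) (t : ℝ) : Set (SigmaPlus T) :=
  {x | x ∈ Mfix T n ∧ birkhoff T f n x ≤ t}

/-- `M_f(t) = Σ_{n≥1} (1/n) #ℳ_f(n,t)`, valued in `[0,∞]`. -/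
noncomputable def Mcount (T : A → A → Prop) (f : SigmaPlus T → ℝ) (t : ℝ) : ℝ≥0∞ :=
  ∑' n : ℕ, ((n : ℝ≥0∞) + 1)⁻¹ * ((Mset T f (n + 1) t).encard : ℝ≥0∞)

/-- `ℛ_f(k,t)`. -/
def Rset (T : A → A → Prop) (f : SigmaPlus T → ℝ) (k : ℕ) (t : ℝ) : Set (SigmaPlus T) :=
  {x | x ∈ Mset T f k t ∧ ∀ n : ℕ, 1 ≤ n → n < k → x ∉ Mset T f n t}

/-- `R_f(t) = Σ_{k≥1} (1/k) #ℛ_f(k,t)`, valued in `[0,∞]`. -/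
noncomputable def Rcount (T : A → A → Prop) (f : SigmaPlus T → ℝ) (t : ℝ) : ℝ≥0∞ :=
  ∑' k : ℕ, ((k : ℝ≥0∞) + 1)⁻¹ * ((Rset T f (k + 1) t).encard : ℝ≥0∞)

/-- The cylinder determined by a word `w` of length `k`. -/
def cylinder (T : A → A → Prop) {k : ℕ} (w : Fin k → A) : Set (SigmaPlus T) :=
  {x | ∀ i : Fin k, x.1 i = w i}

/-- A σ-invariant Gibbs state for `f` (normalized so that `P(f) = 0`). -/
def GibbsState [MeasurableSpace A] (T : A → A → Prop) (f : SigmaPlus T → ℝ)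
    (μ : Measure (SigmaPlus T)) : Prop :=
  IsProbabilityMeasure μ ∧ MeasurePreserving (shift T) μ μ ∧
    ∃ B > (1 : ℝ), ∀ (n : ℕ), 1 ≤ n → ∀ (w : Fin n → A), ∀ x ∈ cylinder T w,
      1 / B ≤ (μ (cylinder T w)).toReal / Real.exp (birkhoff T f n x) ∧
        (μ (cylinder T w)).toReal / Real.exp (birkhoff T f n x) ≤ B

/-- The transfer (Ruelle–Perron–Frobenius) operator. -/
noncomputable def transfer (T : A → A → Prop) (g φ : SigmaPlus T → ℝ)
    (x : SigmaPlus T) : ℝ :=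
  ∑' y : {y : SigmaPlus T // shift T y = x}, Real.exp (g y) * φ y

/-- The renewal function `N_f(φ,x,t)`, valued in `[0,∞]`. -/
noncomputable def renewal (T : A → A → Prop) (f φ : SigmaPlus T → ℝ)
    (x : SigmaPlus T) (t : ℝ) : ℝ≥0∞ :=
  ∑' n : ℕ, ∑' y : {y : SigmaPlus T // (shift T)^[n] y = x},
    ENNReal.ofReal (if birkhoff T f n y ≤ t then φ y else 0)

section Aux

variable {A : Type*} {T : A → A → Prop}

lemma shift_iter (k : ℕ) (x : SigmaPlus T) (i : ℕ) :
    ((shift T)^[k] x).1 i = x.1 (i + k) := by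
  induction k generalizing x with
  | zero => rfl
  | succ k ih =>
    rw [Function.iterate_succ_apply, ih (shift T x)]
    show x.1 (i + k + 1) = _
    congr 1

lemma birkhoff_neg_mul (f : SigmaPlus T → ℝ) (δ : ℝ) (n : ℕ) (y : SigmaPlus T) :
    birkhoff T (fun z => -(δ * f z)) n y = -(δ * birkhoff T f n y) := by
  simp [birkhoff, Finset.mul_sum]

lemma preimage_ext {x y y' : SigmaPlus T} {n : ℕ}
    (hy : (shift T)^[n] y = x) (hy' : (shift T)^[n] y' = x)
    (h : ∀ i < n, y.1 i = y'.1 i) : y = y' := by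
  apply Subtype.ext
  funext j
  by_cases hj : j < n
  · exact h j hj
  · have key : ∀ i, x.1 i = y.1 (i + n) := fun i => by rw [← hy, shift_iter]
    have key' : ∀ i, x.1 i = y'.1 (i + n) := fun i => by rw [← hy', shift_iter]
    have hjn : j - n + n = j := Nat.sub_add_cancel (Nat.le_of_not_lt hj)
    rw [← hjn, ← key (j - n), ← key' (j - n)]

lemma birkhoff_gap {f : SigmaPlus T → ℝ} {c : ℝ} (hc : ∀ z, c ≤ f z)
    {n m : ℕ} (hnm : n ≤ m) (y : SigmaPlus T) :
    birkhoff T f n y + (m - n : ℕ) * c ≤ birkhoff T f m y := by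
  have hsplit : birkhoff T f n y + ∑ i ∈ Finset.Ico n m, f ((shift T)^[i] y)
      = birkhoff T f m y := by
    unfold birkhoff
    simp only [Finset.range_eq_Ico]
    exact Finset.sum_Ico_consecutive _ (Nat.zero_le n) hnm
  rw [← hsplit]
  gcongr
  calc ((m - n : ℕ) : ℝ) * c = (Finset.Ico n m).card • c := by
        rw [Nat.card_Ico, nsmul_eq_mul]
      _ ≤ _ := Finset.card_nsmul_le_sum _ _ _ (fun i _ => hc _)

lemma birkhoff_lb {f : SigmaPlus T → ℝ} {c : ℝ} (hc : ∀ z, c ≤ f z)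
    (n : ℕ) (y : SigmaPlus T) : (n : ℝ) * c ≤ birkhoff T f n y := by
  have := birkhoff_gap hc (Nat.zero_le n) y
  simpa [birkhoff] using this

end Aux
section Aux2

variable {A : Type*} {T : A → A → Prop}

/-- Bounded distortion. -/
lemma dist_birkhoff {f : SigmaPlus T → ℝ} {C α : ℝ} (hC : 0 < C) (hα : 0 < α)
    (hhold : ∀ n : ℕ, 1 ≤ n → ∀ x y : SigmaPlus T,
      (∀ i < n, x.1 i = y.1 i) → |f x - f y| ≤ C * Real.exp (-α * n))
    {n : ℕ} (hn : 1 ≤ n) {y z : SigmaPlus T} (h : ∀ i < n, y.1 i = z.1 i) :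
    |birkhoff T f n y - birkhoff T f n z| ≤
      C * Real.exp (-α) / (1 - Real.exp (-α)) := by
  have hr0 : (0:ℝ) ≤ Real.exp (-α) := (Real.exp_pos _).le
  have hr1 : Real.exp (-α) < 1 := by
    rw [Real.exp_lt_one_iff]; linarith
  have step : ∀ i < n, |f ((shift T)^[i] y) - f ((shift T)^[i] z)|
      ≤ C * Real.exp (-α * (n - i : ℕ)) := by
    intro i hi
    refine hhold (n - i) (by omega) _ _ ?_
    intro j hj
    rw [shift_iter, shift_iter]
    exact h (j + i) (by omega)
  have habs : |birkhoff T f n y - birkhoff T f n z|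
      ≤ ∑ i ∈ Finset.range n, C * Real.exp (-α * (n - i : ℕ)) := by
    unfold birkhoff
    rw [← Finset.sum_sub_distrib]
    refine (Finset.abs_sum_le_sum_abs _ _).trans ?_
    exact Finset.sum_le_sum (fun i hi => step i (Finset.mem_range.mp hi))
  refine habs.trans ?_
  have hre : ∑ i ∈ Finset.range n, C * Real.exp (-α * (n - i : ℕ))
      = ∑ j ∈ Finset.range n, C * Real.exp (-α) * Real.exp (-α) ^ j := by
    rw [← Finset.sum_range_reflect]
    refine Finset.sum_congr rfl (fun j hj => ?_)
    have hj' := Finset.mem_range.mp hj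
    have : (n - (n - 1 - j) : ℕ) = j + 1 := by omega
    rw [this, mul_assoc, ← Real.exp_nat_mul, ← Real.exp_add]
    congr 1
    push_cast
    ring
  rw [hre, ← Finset.mul_sum]
  rw [div_eq_mul_inv]
  refine mul_le_mul_of_nonneg_left ?_ (by positivity)
  calc ∑ j ∈ Finset.range n, Real.exp (-α) ^ j
      ≤ ∑' j : ℕ, Real.exp (-α) ^ j := by
        exact Summable.sum_le_tsum _ (fun j _ => by positivity)
          (summable_geometric_of_lt_one hr0 hr1)
    _ = (1 - Real.exp (-α))⁻¹ := tsum_geometric_of_lt_one hr0 hr1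

lemma Ssup_nonneg {f : SigmaPlus T → ℝ} {c : ℝ} (hc0 : 0 < c)
    (hc : ∀ z, c ≤ f z) (a : A) : 0 ≤ Ssup T f a :=
  Real.sSup_nonneg (by rintro u ⟨z, hz, rfl⟩; exact le_trans hc0.le (hc z))

lemma Ssup_le_f_add {f : SigmaPlus T → ℝ} {C α c : ℝ} (hC : 0 < C) (hα : 0 < α)
    (hc0 : 0 < c) (hc : ∀ z, c ≤ f z)
    (hhold : ∀ n : ℕ, 1 ≤ n → ∀ x y : SigmaPlus T,
      (∀ i < n, x.1 i = y.1 i) → |f x - f y| ≤ C * Real.exp (-α * n))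
    (z : SigmaPlus T) : Ssup T f (z.1 0) ≤ f z + C * Real.exp (-α) := by
  refine Real.sSup_le ?_ ?_
  · rintro u ⟨z', hz', rfl⟩
    have h1 := hhold 1 le_rfl z' z (by intro i hi; interval_cases i; exact hz')
    have habs := (abs_le.mp h1).2
    have e1 : Real.exp (-α * (1:ℕ)) = Real.exp (-α) := by norm_num
    rw [e1] at habs
    linarith
  · have h2 := hc z
    have h3 := mul_pos hC (Real.exp_pos (-α))
    linarith

end Aux2
section Aux3

variable {X : Type*} {ι : Type*}

/-- If every finite subset of `S` has card at most `b < ∞`, then `encard S ≤ b`. -/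
lemma encard_le_of_finset_card_le {S : Set X} {b : ℝ≥0∞} (hb : b ≠ ⊤)
    (h : ∀ F : Finset X, ↑F ⊆ S → (F.card : ℝ≥0∞) ≤ b) :
    (S.encard : ℝ≥0∞) ≤ b := by
  rcases S.finite_or_infinite with hS | hS
  · have := h hS.toFinset (by simp)
    rwa [hS.encard_eq_coe_toFinset_card, ENat.toENNReal_coe]
  · exfalso
    obtain ⟨m, hm⟩ := ENNReal.exists_nat_gt hb
    obtain ⟨F, hFS, hFc⟩ := hS.exists_subset_card_eq m
    have := h F hFS
    rw [hFc] at this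
    exact absurd (this.trans_lt hm) (lt_irrefl _)

/-- Sum of encards of pairwise disjoint subsets of `S` is at most `encard S`. -/
lemma sum_encard_le_encard (s : Finset ι) (g : ι → Set X) (S : Set X)
    (hsub : ∀ i ∈ s, g i ⊆ S)
    (hdisj : ∀ i ∈ s, ∀ j ∈ s, i ≠ j → Disjoint (g i) (g j)) :
    ∑ i ∈ s, (g i).encard ≤ S.encard := by
  classical
  induction s using Finset.cons_induction generalizing S with
  | empty => simp
  | cons a s ha ih =>
    rw [Finset.sum_cons]
    have hga : g a ⊆ S := hsub a (Finset.mem_cons_self a s)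
    have hrest : ∀ i ∈ s, g i ⊆ S \ g a := by
      intro i hi
      have h1 := hsub i (Finset.mem_cons_of_mem hi)
      have h2 := hdisj i (Finset.mem_cons_of_mem hi) a (Finset.mem_cons_self a s)
        (by rintro rfl; exact ha hi)
      intro z hz
      exact ⟨h1 hz, fun hz' => h2.le_bot ⟨hz, hz'⟩⟩
    have hih := ih (S \ g a) hrest
      (fun i hi j hj hij => hdisj i (Finset.mem_cons_of_mem hi) j
        (Finset.mem_cons_of_mem hj) hij)
    calc (g a).encard + ∑ i ∈ s, (g i).encard
        ≤ (g a).encard + (S \ g a).encard := by gcongr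
      _ = (g a ∪ (S \ g a)).encard := (Set.encard_union_eq disjoint_sdiff_right).symm
      _ = S.encard := by rw [Set.union_diff_cancel hga]

/-- `encard` is subadditive over finite covers. -/
lemma encard_le_sum_of_cover (s : Finset ι) (g : ι → Set X) (S : Set X)
    (hcov : S ⊆ ⋃ i ∈ s, g i) :
    S.encard ≤ ∑ i ∈ s, (g i).encard := by
  classical
  induction s using Finset.cons_induction generalizing S with
  | empty => simp at hcov; simp [hcov]
  | cons a s ha ih =>
    rw [Finset.sum_cons]
    have hS : S = (S ∩ g a) ∪ (S \ g a) := by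
      ext z; by_cases hz : z ∈ g a <;> simp [hz]
    have h1 : (S ∩ g a).encard ≤ (g a).encard :=
      Set.encard_mono Set.inter_subset_right
    have h2 : (S \ g a).encard ≤ ∑ i ∈ s, (g i).encard := by
      refine ih _ ?_
      intro z hz
      have := hcov hz.1
      simp only [Finset.mem_cons, Set.mem_iUnion] at this ⊢
      obtain ⟨i, hi | hi, hzi⟩ := this
      · exact absurd (hi ▸ hzi) hz.2
      · exact ⟨i, hi, hzi⟩
    calc S.encard = ((S ∩ g a) ∪ (S \ g a)).encard := by rw [← hS]
      _ ≤ (S ∩ g a).encard + (S \ g a).encard := Set.encard_union_le _ _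
      _ ≤ _ := by gcongr

/-- Prepending equivalence. -/
def consEquiv (A : Type*) (n : ℕ) : A × (Fin n → A) ≃ (Fin (n + 1) → A) where
  toFun := fun p => Fin.cons p.1 p.2
  invFun := fun w => (w 0, fun i => w i.succ)
  left_inv := by intro p; simp
  right_inv := fun w => Fin.cons_self_tail w

lemma consEquiv_zero {A : Type*} {n : ℕ} (a : A) (v : Fin n → A) :
    (consEquiv A n (a, v)) 0 = a := by
  show (Fin.cons a v : Fin (n + 1) → A) 0 = a
  simp

lemma consEquiv_succ {A : Type*} {n : ℕ} (a : A) (v : Fin n → A) (i : Fin n) :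
    (consEquiv A n (a, v)) i.succ = v i := by
  show (Fin.cons a v : Fin (n + 1) → A) i.succ = v i
  simp

/-- tsum over function space of a product. -/
lemma tsum_pi_pow {A : Type*} (g : A → ℝ≥0∞) :
    ∀ n : ℕ, ∑' w : Fin n → A, ∏ i, g (w i) = (∑' a, g a) ^ n := by
  intro n
  induction n with
  | zero =>
    rw [pow_zero]
    rw [tsum_eq_single (fun i => i.elim0) (by
      intro b hb; exact absurd (funext fun i => i.elim0) hb)]
    simp
  | succ n ih =>
    rw [← Equiv.tsum_eq (consEquiv A n) (fun w => ∏ i, g (w i))]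
    rw [ENNReal.tsum_prod']
    have : ∀ (a : A) (v : Fin n → A),
        (∏ i, g ((consEquiv A n (a, v)) i)) = g a * ∏ i, g (v i) := by
      intro a v
      rw [Fin.prod_univ_succ]
      have h0 : (consEquiv A n (a, v)) 0 = a := consEquiv_zero a v
      have hs : ∀ i : Fin n, (consEquiv A n (a, v)) i.succ = v i :=
        fun i => consEquiv_succ a v i
      rw [h0]
      congr 1
      try exact Finset.prod_congr rfl (fun i _ => by rw [hs i])
    calc ∑' a, ∑' v : Fin n → A, ∏ i, g ((consEquiv A n (a, v)) i)
        = ∑' a, ∑' v : Fin n → A, g a * ∏ i, g (v i) := by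
          congr 1; funext a; congr 1; funext v; exact this a v
      _ = ∑' a, g a * ∑' v : Fin n → A, ∏ i, g (v i) := by
          congr 1; funext a; exact ENNReal.tsum_mul_left
      _ = (∑' a, g a) * (∑' v : Fin n → A, ∏ i, g (v i)) :=
          ENNReal.tsum_mul_right
      _ = (∑' a, g a) ^ (n + 1) := by rw [ih, pow_succ]; ring

end Aux3
section Aux4

variable {A : Type*} {T : A → A → Prop}

lemma enat_coe_sum {ι : Type*} (s : Finset ι) (h : ι → ℕ∞) :
    ((∑ i ∈ s, h i : ℕ∞) : ℝ≥0∞) = ∑ i ∈ s, ((h i : ℕ∞) : ℝ≥0∞) := by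
  classical
  induction s using Finset.cons_induction with
  | empty => simp
  | cons a s ha ih => rw [Finset.sum_cons, Finset.sum_cons, ENat.toENNReal_add, ih]

/-- Cylinder of a list. -/
def cylL (T : A → A → Prop) (w : List A) : Set (SigmaPlus T) :=
  {z | ∀ i : Fin w.length, z.1 i.1 = w.get i}

lemma cylL_eq_cylinder (w : List A) :
    cylL T w = cylinder T (fun i : Fin w.length => w.get i) := rfl

lemma measurableSet_cylinder [MeasurableSpace A] [MeasurableSingletonClass A]
    {k : ℕ} (w : Fin k → A) : MeasurableSet (cylinder T w) := by
  have : cylinder T w = ⋂ i : Fin k, (fun z : SigmaPlus T => z.1 i.1) ⁻¹' {w i} := by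
    ext z; simp [cylinder, Set.mem_iInter]
  rw [this]
  exact MeasurableSet.iInter fun i =>
    ((measurable_pi_apply i.1).comp measurable_subtype_coe) (measurableSet_singleton _)

lemma cylL_disjoint_of_ne_same_length {w w' : List A}
    (hlen : w.length = w'.length) (hne : w ≠ w') :
    Disjoint (cylL T w) (cylL T w') := by
  rw [Set.disjoint_left]
  intro z hz hz'
  refine hne (List.ext_get hlen ?_)
  intro i h1 h2
  rw [← hz ⟨i, h1⟩, ← hz' ⟨i, h2⟩]

end Aux4
section Aux5

variable {A : Type*} {T : A → A → Prop}

/-- The "slice membership" set of words. -/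
def Lslice (T : A → A → Prop) (f : SigmaPlus T → ℝ) (x : SigmaPlus T) (k : ℕ) :
    Set (List A) :=
  {w | 0 < w.length ∧ ∃ y : SigmaPlus T, (shift T)^[w.length] y = x ∧
    (∀ i : Fin w.length, y.1 i.1 = w.get i) ∧
    (k : ℝ) < birkhoff T f w.length y ∧ birkhoff T f w.length y ≤ (k : ℝ) + 1}

/-- Disjointness of cylinders over words in a common slice whose lengths differ by a lot. -/
lemma Lslice_disjoint {f : SigmaPlus T → ℝ} {C α c : ℝ}
    (hC : 0 < C) (hα : 0 < α) (hc0 : 0 < c) (hc : ∀ z, c ≤ f z)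
    (hhold : ∀ n : ℕ, 1 ≤ n → ∀ x y : SigmaPlus T,
      (∀ i < n, x.1 i = y.1 i) → |f x - f y| ≤ C * Real.exp (-α * n))
    {x : SigmaPlus T} {k : ℕ} {w w' : List A}
    (hw : w ∈ Lslice T f x k) (hw' : w' ∈ Lslice T f x k)
    (hlen : w.length < w'.length)
    (hgap : (1 + C * Real.exp (-α) / (1 - Real.exp (-α))) ≤ (w'.length - w.length : ℕ) * c) :
    Disjoint (cylL T w) (cylL T w') := by
  set Ch := C * Real.exp (-α) / (1 - Real.exp (-α)) with hCh
  rw [Set.disjoint_left]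
  intro z hz hz'
  obtain ⟨hl, y, hy, hyw, hk1, hk2⟩ := hw
  obtain ⟨hl', y', hy', hyw', hk1', hk2'⟩ := hw'
  -- y and y' agree on the first w.length coordinates
  have hagree : ∀ i < w.length, y.1 i = y'.1 i := by
    intro i hi
    have hi' : i < w'.length := lt_trans hi hlen
    have e1 : y.1 i = z.1 i := by
      rw [hyw ⟨i, hi⟩, ← hz ⟨i, hi⟩]
    have e2 : y'.1 i = z.1 i := by
      rw [hyw' ⟨i, hi'⟩]
      have hzz := hz' ⟨i, hi'⟩
      -- z agrees with w' on coordinate i, and w extends… rather both equal z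
      rw [← hzz]
    rw [e1, e2]
  have hdist := dist_birkhoff hC hα hhold hl hagree
  have hgapS := birkhoff_gap hc (le_of_lt hlen) y'
  have h1 : birkhoff T f w.length y - Ch ≤ birkhoff T f w.length y' := by
    have := abs_le.mp hdist
    linarith [this.1, this.2]
  linarith [hk1, hk2']
  
end Aux5
section Aux6

variable {A : Type*} {T : A → A → Prop}

/-- Counting words in a residue class of a slice, via the Gibbs property. -/
lemma Lslice_res_count [MeasurableSpace A] [MeasurableSingletonClass A]
    {f : SigmaPlus T → ℝ} {C α c δ B : ℝ} {μ : Measure (SigmaPlus T)}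
    [IsProbabilityMeasure μ]
    (hC : 0 < C) (hα : 0 < α) (hc0 : 0 < c) (hc : ∀ z, c ≤ f z)
    (hδ0 : 0 < δ) (hB : 1 < B)
    (hhold : ∀ n : ℕ, 1 ≤ n → ∀ x y : SigmaPlus T,
      (∀ i < n, x.1 i = y.1 i) → |f x - f y| ≤ C * Real.exp (-α * n))
    (hGibbs : ∀ (n : ℕ), 1 ≤ n → ∀ (w : Fin n → A), ∀ y ∈ cylinder T w,
      1 / B ≤ (μ (cylinder T w)).toReal /
        Real.exp (birkhoff T (fun z => -(δ * f z)) n y))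
    (x : SigmaPlus T) (k : ℕ) (m₀ : ℕ)
    (hgap : ∀ d : ℕ, m₀ ≤ d →
      (1 + C * Real.exp (-α) / (1 - Real.exp (-α))) ≤ (d : ℝ) * c)
    (r : ℕ) :
    (({w ∈ Lslice T f x k | w.length % m₀ = r}).encard : ℝ≥0∞)
      ≤ ENNReal.ofReal (B * Real.exp (δ * (k + 1))) := by
  set S := {w ∈ Lslice T f x k | w.length % m₀ = r}
  -- each cylinder has measure at least q
  set q : ℝ := Real.exp (-(δ * (k + 1))) / B with hq
  have hq0 : 0 < q := by positivity
  have hmeas : ∀ w : List A, MeasurableSet (cylL T w) := by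
    intro w
    rw [cylL_eq_cylinder]
    exact measurableSet_cylinder _
  have hlow : ∀ w ∈ S, ENNReal.ofReal q ≤ μ (cylL T w) := by
    rintro w ⟨⟨hl, y, hy, hyw, hk1, hk2⟩, _⟩
    have hymem : y ∈ cylinder T (fun i : Fin w.length => w.get i) := hyw
    have hg := hGibbs w.length hl _ y hymem
    set E := Real.exp (birkhoff T (fun z => -(δ * f z)) w.length y) with hE
    have hE0 : 0 < E := Real.exp_pos _
    have hB0 : (0:ℝ) < B := lt_trans one_pos hB
    rw [div_le_div_iff₀ hB0 hE0] at hg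
    have hmge : E / B ≤ (μ (cylinder T (fun i : Fin w.length => w.get i))).toReal := by
      rw [div_le_iff₀ hB0]; linarith
    have hEge : Real.exp (-(δ * (k + 1))) ≤ E := by
      rw [hE, birkhoff_neg_mul]
      apply Real.exp_le_exp.mpr
      have : δ * birkhoff T f w.length y ≤ δ * (k + 1) :=
        mul_le_mul_of_nonneg_left hk2 hδ0.le
      linarith
    have : q ≤ (μ (cylL T w)).toReal := by
      rw [cylL_eq_cylinder]
      refine le_trans ?_ hmge
      rw [hq]
      exact (div_le_div_iff_of_pos_right hB0).mpr hEge
    exact ENNReal.ofReal_le_of_le_toReal this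
  -- pairwise disjointness of cylinders on S
  have hdisj : ∀ w ∈ S, ∀ w' ∈ S, w ≠ w' → Disjoint (cylL T w) (cylL T w') := by
    intro w hw w' hw' hne
    rcases lt_trichotomy w.length w'.length with h | h | h
    · refine Lslice_disjoint hC hα hc0 hc hhold hw.1 hw'.1 h (hgap _ ?_)
      have h1 := hw.2; have h2 := hw'.2
      have : m₀ ∣ w'.length - w.length := by
        refine (Nat.modEq_iff_dvd' (le_of_lt h)).mp ?_
        unfold Nat.ModEq
        omega
      exact Nat.le_of_dvd (by omega) this
    · exact cylL_disjoint_of_ne_same_length h hne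
    · refine (Lslice_disjoint hC hα hc0 hc hhold hw'.1 hw.1 h (hgap _ ?_)).symm
      have h1 := hw.2; have h2 := hw'.2
      have : m₀ ∣ w.length - w'.length := by
        refine (Nat.modEq_iff_dvd' (le_of_lt h)).mp ?_
        unfold Nat.ModEq
        omega
      exact Nat.le_of_dvd (by omega) this
  -- finite subfamilies
  refine encard_le_of_finset_card_le ENNReal.ofReal_ne_top ?_
  intro F hFS
  have hsum : (F.card : ℝ≥0∞) * ENNReal.ofReal q ≤ 1 := by
    calc (F.card : ℝ≥0∞) * ENNReal.ofReal q
        = ∑ w ∈ F, ENNReal.ofReal q := by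
          rw [Finset.sum_const, nsmul_eq_mul]
      _ ≤ ∑ w ∈ F, μ (cylL T w) :=
          Finset.sum_le_sum (fun w hw => hlow w (hFS hw))
      _ = μ (⋃ w ∈ F, cylL T w) := by
          refine (measure_biUnion_finset ?_ (fun w _ => hmeas w)).symm
          intro w hw w' hw' hne
          exact hdisj w (hFS hw) w' (hFS hw') hne
      _ ≤ 1 := prob_le_one
  have hqinv : (ENNReal.ofReal q)⁻¹ = ENNReal.ofReal (B * Real.exp (δ * (k + 1))) := by
    rw [← ENNReal.ofReal_inv_of_pos hq0]
    congr 1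
    rw [hq, Real.exp_neg]
    field_simp
  rw [← hqinv]
  rw [ENNReal.le_inv_iff_mul_le]
  exact hsum

end Aux6
section Aux7

variable {A : Type*} {T : A → A → Prop}

/-- Global renewal-type counting bound: `Σ_n #{y : σ^{n+1} y = x, S_{n+1} f(y) ≤ t} ≤ C e^{δ t}`. -/
lemma renewal_count_bound [MeasurableSpace A] [MeasurableSingletonClass A]
    {f : SigmaPlus T → ℝ} {C α c δ B : ℝ} {μ : Measure (SigmaPlus T)}
    [IsProbabilityMeasure μ]
    (hC : 0 < C) (hα : 0 < α) (hc0 : 0 < c) (hc : ∀ z, c ≤ f z)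
    (hδ0 : 0 < δ) (hB : 1 < B)
    (hhold : ∀ n : ℕ, 1 ≤ n → ∀ x y : SigmaPlus T,
      (∀ i < n, x.1 i = y.1 i) → |f x - f y| ≤ C * Real.exp (-α * n))
    (hGibbs : ∀ (n : ℕ), 1 ≤ n → ∀ (w : Fin n → A), ∀ y ∈ cylinder T w,
      1 / B ≤ (μ (cylinder T w)).toReal /
        Real.exp (birkhoff T (fun z => -(δ * f z)) n y)) :
    ∃ CN : ℝ, 0 < CN ∧ ∀ (x : SigmaPlus T) (t : ℝ), 0 < t →
      ∑' n : ℕ, ({y : SigmaPlus T | (shift T)^[n + 1] y = x ∧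
          birkhoff T f (n + 1) y ≤ t}.encard : ℝ≥0∞)
        ≤ ENNReal.ofReal (CN * Real.exp (δ * t)) := by
  classical
  set Ch := C * Real.exp (-α) / (1 - Real.exp (-α)) with hCh
  have hCh0 : 0 < Ch := by
    have h1 : Real.exp (-α) < 1 := by rw [Real.exp_lt_one_iff]; linarith
    have h2 : 0 < Real.exp (-α) := Real.exp_pos _
    have : 0 < 1 - Real.exp (-α) := by linarith
    positivity
  set m₀ : ℕ := ⌈(1 + Ch) / c⌉₊ + 1 with hm₀def
  have hm₀pos : 0 < m₀ := Nat.succ_pos _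
  have hgap : ∀ d : ℕ, m₀ ≤ d → 1 + Ch ≤ (d : ℝ) * c := by
    intro d hd
    have h1 : (1 + Ch) / c ≤ (⌈(1 + Ch) / c⌉₊ : ℝ) := Nat.le_ceil _
    have h2 : ((⌈(1 + Ch) / c⌉₊ : ℕ) : ℝ) ≤ (d : ℝ) := by
      exact_mod_cast le_trans (Nat.le_succ _) hd
    have h3 : (1 + Ch) / c ≤ (d : ℝ) := le_trans h1 h2
    calc 1 + Ch = ((1 + Ch) / c) * c := by field_simp
      _ ≤ (d : ℝ) * c := mul_le_mul_of_nonneg_right h3 hc0.le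
  have hB0 : (0:ℝ) < B := lt_trans one_pos hB
  have hexpδ1 : (1:ℝ) < Real.exp δ := by nlinarith [Real.add_one_le_exp δ]
  have hden : (0:ℝ) < Real.exp δ - 1 := by linarith
  refine ⟨(m₀ : ℝ) * B * Real.exp δ * Real.exp δ / (Real.exp δ - 1),
    div_pos (by positivity) hden, ?_⟩
  intro x t ht
  set K := ⌈t⌉₊ with hKdef
  -- slices of preimages
  set Q : ℕ → ℕ → Set (SigmaPlus T) := fun m k =>
    {y | (shift T)^[m] y = x ∧ (k : ℝ) < birkhoff T f m y ∧
      birkhoff T f m y ≤ (k : ℝ) + 1} with hQdef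
  -- Step 1: the tsum over n for a fixed slice k
  have hslice : ∀ k : ℕ, ∑' n : ℕ, ((Q (n + 1) k).encard : ℝ≥0∞)
      ≤ (m₀ : ℝ≥0∞) * ENNReal.ofReal (B * Real.exp (δ * (k + 1))) := by
    intro k
    refine Summable.tsum_le_of_sum_range_le ENNReal.summable ?_
    intro m
    set wmap : (n : ℕ) → SigmaPlus T → List A :=
      fun n y => List.ofFn (fun i : Fin n => y.1 i.1) with hwmap
    set g : ℕ → Set (List A) := fun n => wmap (n + 1) '' Q (n + 1) k with hg
    have hleng : ∀ n w, w ∈ g n → w.length = n + 1 := by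
      rintro n w ⟨y, _, rfl⟩
      exact List.length_ofFn
    have hinj : ∀ n, Set.InjOn (wmap (n + 1)) (Q (n + 1) k) := by
      intro n y hy y' hy' heq
      have hfn := List.ofFn_inj.mp heq
      refine preimage_ext hy.1 hy'.1 ?_
      intro i hi
      exact congrFun hfn ⟨i, hi⟩
    have hcard : ∀ n, (Q (n + 1) k).encard = (g n).encard :=
      fun n => ((hinj n).encard_image).symm
    have hsub : ∀ n, g n ⊆ Lslice T f x k := by
      rintro n w ⟨y, hy, rfl⟩
      have hlw : (wmap (n + 1) y).length = n + 1 := List.length_ofFn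
      refine ⟨by omega, y, ?_, ?_, ?_, ?_⟩
      · rw [hlw]; exact hy.1
      · intro i
        exact (List.get_ofFn (fun i : Fin (n + 1) => y.1 i.1) i).symm
      · rw [hlw]; exact hy.2.1
      · rw [hlw]; exact hy.2.2
    have hdisjg : ∀ i ∈ Finset.range m, ∀ j ∈ Finset.range m, i ≠ j →
        Disjoint (g i) (g j) := by
      intro i _ j _ hij
      rw [Set.disjoint_left]
      intro w hwi hwj
      have := hleng i w hwi
      have := hleng j w hwj
      omega
    have hstep1 : ∑ n ∈ Finset.range m, (Q (n + 1) k).encard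
        ≤ (Lslice T f x k).encard := by
      calc ∑ n ∈ Finset.range m, (Q (n + 1) k).encard
          = ∑ n ∈ Finset.range m, (g n).encard :=
            Finset.sum_congr rfl (fun n _ => hcard n)
        _ ≤ _ := sum_encard_le_encard _ _ _ (fun n _ => hsub n) hdisjg
    have hstep2 : (Lslice T f x k).encard
        ≤ ∑ r ∈ Finset.range m₀, ({w ∈ Lslice T f x k | w.length % m₀ = r}).encard := by
      refine encard_le_sum_of_cover _ _ _ ?_
      intro w hw
      simp only [Set.mem_iUnion]
      exact ⟨w.length % m₀, by
        simp only [Finset.mem_range]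
        exact Nat.mod_lt _ hm₀pos, hw, rfl⟩
    calc ∑ n ∈ Finset.range m, ((Q (n + 1) k).encard : ℝ≥0∞)
        = ((∑ n ∈ Finset.range m, (Q (n + 1) k).encard : ℕ∞) : ℝ≥0∞) :=
          (enat_coe_sum _ _).symm
      _ ≤ ((∑ r ∈ Finset.range m₀,
            ({w ∈ Lslice T f x k | w.length % m₀ = r}).encard : ℕ∞) : ℝ≥0∞) := by
          rw [ENat.toENNReal_le]
          exact le_trans hstep1 hstep2
      _ = ∑ r ∈ Finset.range m₀,
            (({w ∈ Lslice T f x k | w.length % m₀ = r}).encard : ℝ≥0∞) :=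
          enat_coe_sum _ _
      _ ≤ ∑ r ∈ Finset.range m₀, ENNReal.ofReal (B * Real.exp (δ * (k + 1))) := by
          refine Finset.sum_le_sum (fun r _ => ?_)
          exact Lslice_res_count hC hα hc0 hc hδ0 hB hhold hGibbs x k m₀ hgap r
      _ = (m₀ : ℝ≥0∞) * ENNReal.ofReal (B * Real.exp (δ * (k + 1))) := by
          rw [Finset.sum_const, Finset.card_range, nsmul_eq_mul]
  -- Step 2: covering by slices
  have hcover : ∀ n : ℕ,
      ({y : SigmaPlus T | (shift T)^[n + 1] y = x ∧
          birkhoff T f (n + 1) y ≤ t}.encard)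
        ≤ ∑ k ∈ Finset.range K, (Q (n + 1) k).encard := by
    intro n
    refine encard_le_sum_of_cover _ _ _ ?_
    rintro y ⟨hyx, hyt⟩
    have hlb := birkhoff_lb hc (n + 1) y
    have hS0 : 0 < birkhoff T f (n + 1) y := by
      have h1 : (1:ℝ) ≤ (n + 1 : ℕ) := by exact_mod_cast Nat.one_le_iff_ne_zero.mpr (by omega)
      nlinarith
    set Sv := birkhoff T f (n + 1) y with hSv
    have hceil : 0 < ⌈Sv⌉₊ := Nat.ceil_pos.mpr hS0
    set k := ⌈Sv⌉₊ - 1 with hkdef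
    have hksucc : k + 1 = ⌈Sv⌉₊ := by omega
    have hk1 : (k : ℝ) < Sv := Nat.lt_ceil.mp (by omega)
    have hk2 : Sv ≤ (k : ℝ) + 1 := by
      have := Nat.le_ceil Sv
      rw [← hksucc] at this
      exact_mod_cast this
    have hkK : k < K := by
      have : ⌈Sv⌉₊ ≤ K := Nat.ceil_le_ceil hyt
      omega
    simp only [Set.mem_iUnion]
    exact ⟨k, by simpa [Finset.mem_range] using hkK, hyx, hk1, hk2⟩
  -- Step 3: put everything together
  calc ∑' n : ℕ, ({y : SigmaPlus T | (shift T)^[n + 1] y = x ∧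
          birkhoff T f (n + 1) y ≤ t}.encard : ℝ≥0∞)
      ≤ ∑' n : ℕ, ((∑ k ∈ Finset.range K, (Q (n + 1) k).encard : ℕ∞) : ℝ≥0∞) := by
        refine ENNReal.tsum_le_tsum (fun n => ?_)
        rw [ENat.toENNReal_le]
        exact hcover n
    _ = ∑' n : ℕ, ∑ k ∈ Finset.range K, ((Q (n + 1) k).encard : ℝ≥0∞) := by
        congr 1; funext n; exact enat_coe_sum _ _
    _ = ∑ k ∈ Finset.range K, ∑' n : ℕ, ((Q (n + 1) k).encard : ℝ≥0∞) :=
        Summable.tsum_finsetSum (fun k _ => ENNReal.summable)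
    _ ≤ ∑ k ∈ Finset.range K, (m₀ : ℝ≥0∞) * ENNReal.ofReal (B * Real.exp (δ * (k + 1))) :=
        Finset.sum_le_sum (fun k _ => hslice k)
    _ = ENNReal.ofReal (∑ k ∈ Finset.range K, (m₀ : ℝ) * (B * Real.exp (δ * (k + 1)))) := by
        rw [ENNReal.ofReal_sum_of_nonneg (fun k _ => by positivity)]
        refine Finset.sum_congr rfl (fun k _ => ?_)
        rw [← ENNReal.ofReal_natCast m₀, ← ENNReal.ofReal_mul (by positivity)]
    _ ≤ ENNReal.ofReal ((m₀ : ℝ) * B * Real.exp δ * Real.exp δ / (Real.exp δ - 1)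
          * Real.exp (δ * t)) := by
        refine ENNReal.ofReal_le_ofReal ?_
        have hgeo : ∑ k ∈ Finset.range K, Real.exp (δ * (k + 1))
            = Real.exp δ * ((Real.exp δ) ^ K - 1) / (Real.exp δ - 1) := by
          have : ∀ k : ℕ, Real.exp (δ * (k + 1)) = Real.exp δ * (Real.exp δ) ^ k := by
            intro k
            rw [← Real.exp_nat_mul, ← Real.exp_add]
            congr 1
            push_cast
            ring
          rw [Finset.sum_congr rfl (fun k _ => this k), ← Finset.mul_sum,
            geom_sum_eq (ne_of_gt hexpδ1)]
          ring
        have hexpK : (Real.exp δ) ^ K ≤ Real.exp (δ * (t + 1)) := by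
          rw [← Real.exp_nat_mul]
          apply Real.exp_le_exp.mpr
          have hKt : (K : ℝ) ≤ t + 1 := le_of_lt (Nat.ceil_lt_add_one ht.le)
          calc (K : ℝ) * δ = δ * K := by ring
            _ ≤ δ * (t + 1) := mul_le_mul_of_nonneg_left hKt hδ0.le
        calc ∑ k ∈ Finset.range K, (m₀ : ℝ) * (B * Real.exp (δ * (k + 1)))
            = (m₀ : ℝ) * B * ∑ k ∈ Finset.range K, Real.exp (δ * (k + 1)) := by
              rw [Finset.mul_sum]
              exact Finset.sum_congr rfl (fun k _ => by ring)
          _ = (m₀ : ℝ) * B * (Real.exp δ * ((Real.exp δ) ^ K - 1) / (Real.exp δ - 1)) := by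
              rw [hgeo]
          _ ≤ (m₀ : ℝ) * B * (Real.exp δ * Real.exp (δ * (t + 1)) / (Real.exp δ - 1)) := by
              have h1 : (Real.exp δ) ^ K - 1 ≤ Real.exp (δ * (t + 1)) := by
                linarith [hexpK, Real.exp_pos (δ * (t + 1))]
              refine mul_le_mul_of_nonneg_left ((div_le_div_iff_of_pos_right hden).mpr ?_)
                (by positivity)
              exact mul_le_mul_of_nonneg_left h1 (Real.exp_pos δ).le
          _ = (m₀ : ℝ) * B * Real.exp δ * Real.exp δ / (Real.exp δ - 1)
              * Real.exp (δ * t) := by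
              rw [show δ * (t + 1) = δ * t + δ by ring, Real.exp_add]
              ring

end Aux7
section Aux8

variable {A : Type*} {T : A → A → Prop}

/-- Chernoff-type counting bound for `n`-preimages with small Birkhoff sum. -/
lemma chernoff_count {f : SigmaPlus T → ℝ} {C α c s₁ : ℝ}
    (hC : 0 < C) (hα : 0 < α) (hc0 : 0 < c) (hc : ∀ z, c ≤ f z)
    (hs₁ : 0 < s₁)
    (hsum : Summable fun a : A => Real.exp (-s₁ * Ssup T f a))
    (hhold : ∀ n : ℕ, 1 ≤ n → ∀ x y : SigmaPlus T,
      (∀ i < n, x.1 i = y.1 i) → |f x - f y| ≤ C * Real.exp (-α * n))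
    (x : SigmaPlus T) (t : ℝ) (n : ℕ) :
    ({y : SigmaPlus T | (shift T)^[n] y = x ∧ birkhoff T f n y ≤ t}.encard : ℝ≥0∞)
      ≤ ENNReal.ofReal (Real.exp (s₁ * (t + n * (C * Real.exp (-α)))))
        * (∑' a : A, ENNReal.ofReal (Real.exp (-s₁ * Ssup T f a))) ^ n := by
  classical
  set v : ℝ := C * Real.exp (-α) with hv
  set W : ℝ≥0∞ := ∑' a : A, ENNReal.ofReal (Real.exp (-s₁ * Ssup T f a)) with hW
  have hWne : W ≠ ⊤ := by
    rw [hW, ← ENNReal.ofReal_tsum_of_nonneg (fun a => (Real.exp_pos _).le) hsum]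
    exact ENNReal.ofReal_ne_top
  refine encard_le_of_finset_card_le
    (ENNReal.mul_ne_top ENNReal.ofReal_ne_top (ENNReal.pow_ne_top hWne)) ?_
  intro F hFS
  set g : A → ℝ≥0∞ := fun a => ENNReal.ofReal (Real.exp (-s₁ * Ssup T f a)) with hgdef
  set wfun : SigmaPlus T → (Fin n → A) := fun y i => y.1 i.1 with hwfun
  have hper : ∀ y ∈ F, (1 : ℝ≥0∞)
      ≤ ENNReal.ofReal (Real.exp (s₁ * (t + n * v))) * ∏ i : Fin n, g (y.1 i.1) := by
    intro y hyF
    obtain ⟨hyx, hyt⟩ := hFS hyF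
    have hSsum : ∑ i : Fin n, Ssup T f (y.1 i.1) ≤ t + n * v := by
      have hstep : ∀ i : Fin n, Ssup T f (y.1 i.1) ≤ f ((shift T)^[i.1] y) + v := by
        intro i
        have h0 : ((shift T)^[i.1] y).1 0 = y.1 i.1 := by
          rw [shift_iter, Nat.zero_add]
        rw [← h0]
        exact Ssup_le_f_add hC hα hc0 hc hhold _
      have h1 : ∑ i : Fin n, Ssup T f (y.1 i.1)
          ≤ ∑ i : Fin n, (f ((shift T)^[i.1] y) + v) :=
        Finset.sum_le_sum (fun i _ => hstep i)
      have h2 : ∑ i : Fin n, (f ((shift T)^[i.1] y) + v)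
          = birkhoff T f n y + n * v := by
        rw [Finset.sum_add_distrib]
        congr 1
        · exact Fin.sum_univ_eq_sum_range (fun m => f ((shift T)^[m] y)) n
        · simp [Finset.card_univ, mul_comm]
      linarith [h1, h2.le, h2.ge, hyt]
    have hprod : ∏ i : Fin n, g (y.1 i.1)
        = ENNReal.ofReal (Real.exp (∑ i : Fin n, -s₁ * Ssup T f (y.1 i.1))) := by
      rw [Real.exp_sum]
      rw [ENNReal.ofReal_prod_of_nonneg (fun i _ => (Real.exp_pos _).le)]
    rw [hprod, ← ENNReal.ofReal_mul (by positivity), ← Real.exp_add]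
    have hexp0 : (0:ℝ) ≤ s₁ * (t + n * v) + ∑ i : Fin n, -s₁ * Ssup T f (y.1 i.1) := by
      have : ∑ i : Fin n, -s₁ * Ssup T f (y.1 i.1)
          = -s₁ * ∑ i : Fin n, Ssup T f (y.1 i.1) := by
        rw [Finset.mul_sum]
      rw [this]
      nlinarith [hSsum, hs₁]
    calc (1:ℝ≥0∞) = ENNReal.ofReal (Real.exp 0) := by simp
      _ ≤ _ := by
          apply ENNReal.ofReal_le_ofReal
          exact Real.exp_le_exp.mpr hexp0
  have hinj : ∀ y ∈ F, ∀ y' ∈ F, wfun y = wfun y' → y = y' := by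
    intro y hy y' hy' heq
    refine preimage_ext (hFS hy).1 (hFS hy').1 ?_
    intro i hi
    exact congrFun heq ⟨i, hi⟩
  calc (F.card : ℝ≥0∞) = ∑ _y ∈ F, (1:ℝ≥0∞) := by
        rw [Finset.sum_const, nsmul_eq_mul, mul_one]
    _ ≤ ∑ y ∈ F, ENNReal.ofReal (Real.exp (s₁ * (t + n * v)))
          * ∏ i : Fin n, g (y.1 i.1) :=
        Finset.sum_le_sum hper
    _ = ENNReal.ofReal (Real.exp (s₁ * (t + n * v)))
          * ∑ y ∈ F, ∏ i : Fin n, g ((wfun y) i) := by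
        rw [Finset.mul_sum]
    _ = ENNReal.ofReal (Real.exp (s₁ * (t + n * v)))
          * ∑ w ∈ F.image wfun, ∏ i : Fin n, g (w i) := by
        rw [Finset.sum_image hinj]
    _ ≤ ENNReal.ofReal (Real.exp (s₁ * (t + n * v)))
          * ∑' w : Fin n → A, ∏ i : Fin n, g (w i) := by
        gcongr
        exact ENNReal.sum_le_tsum _
    _ = ENNReal.ofReal (Real.exp (s₁ * (t + n * v))) * W ^ n := by
        rw [tsum_pi_pow]

end Aux8
/-- Coarse estimate: `Σ_{n≥1} (1/n) #{y : σⁿ y = x, S_n f(y) ≤ t} ≤ G e^{tδ}/t`. -/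
theorem coarse_weighted_preimage_bound
    {A : Type*} [Countable A] [MeasurableSpace A] [MeasurableSingletonClass A]
    (T : A → A → Prop)
    (f : SigmaPlus T → ℝ) (δ : ℝ) (μ : Measure (SigmaPlus T))
    (hmix : TopMixing T) (hbip : BIP T)
    (hhold : LocHolder T f)
    (hpos : StrictPositive T f)
    (hna : NonArithmetic T f)
    (hfin : (convSet T f).Nonempty)
    (hd0 : 0 < dcrit T f)
    (hδ : dcrit T f < δ)
    (hP : HasGurevichPressure T (fun x => -(δ * f x)) 0)
    (hμ : GibbsState T (fun x => -(δ * f x)) μ)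
    (hfint : Integrable f μ)
    (hfbar : 0 < ∫ x, f x ∂μ) :
    ∃ G > (0 : ℝ), ∀ x : SigmaPlus T, ∀ t > (0 : ℝ),
      (∑' n : ℕ, ((n : ℝ≥0∞) + 1)⁻¹ *
        ({y : SigmaPlus T | (shift T)^[n + 1] y = x ∧
            birkhoff T f (n + 1) y ≤ t}.encard : ℝ≥0∞))
        ≤ ENNReal.ofReal (G * Real.exp (t * δ) / t) := by
  classical
  obtain ⟨C, hC, α, hα, hhold⟩ := hhold
  obtain ⟨c, hc0, hc⟩ := hpos
  obtain ⟨hprob, hinv, B, hB, hGibbsfull⟩ := hμ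
  haveI : IsProbabilityMeasure μ := hprob
  have hGibbs : ∀ (n : ℕ), 1 ≤ n → ∀ (w : Fin n → A), ∀ y ∈ cylinder T w,
      1 / B ≤ (μ (cylinder T w)).toReal /
        Real.exp (birkhoff T (fun z => -(δ * f z)) n y) :=
    fun n hn w y hy => (hGibbsfull n hn w y hy).1
  have hδ0 : 0 < δ := lt_trans hd0 hδ
  -- choose a summability parameter s₁ < δ
  have hbdd : BddBelow (convSet T f) := ⟨0, fun s hs => hs.1.le⟩
  obtain ⟨s₁, hs₁mem, hs₁δ⟩ := (csInf_lt_iff hbdd hfin).mp hδ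
  obtain ⟨hs₁0, hsum⟩ := hs₁mem
  -- Part II constant
  obtain ⟨CN, hCN0, hPartII⟩ :=
    renewal_count_bound (μ := μ) hC hα hc0 hc hδ0 hB hhold hGibbs
  -- Chernoff constants
  set v : ℝ := C * Real.exp (-α) with hv
  have hv0 : 0 < v := by positivity
  set W : ℝ≥0∞ := ∑' a : A, ENNReal.ofReal (Real.exp (-s₁ * Ssup T f a)) with hW
  have hWne : W ≠ ⊤ := by
    rw [hW, ← ENNReal.ofReal_tsum_of_nonneg (fun a => (Real.exp_pos _).le) hsum]
    exact ENNReal.ofReal_ne_top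
  set Z : ℝ := max W.toReal 1 with hZ
  have hZ1 : 1 ≤ Z := le_max_right _ _
  have hZ0 : 0 < Z := lt_of_lt_of_le one_pos hZ1
  have hWZ : W ≤ ENNReal.ofReal Z := by
    rw [← ENNReal.ofReal_toReal hWne]
    exact ENNReal.ofReal_le_ofReal (le_max_left _ _)
  set L : ℝ := s₁ * v + Real.log Z with hL
  have hL0 : 0 ≤ L := add_nonneg (by positivity) (Real.log_nonneg hZ1)
  set η₀ : ℝ := (δ - s₁) / 2 with hη₀
  have hη₀0 : 0 < η₀ := by rw [hη₀]; linarith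
  set ε : ℝ := η₀ / (L + 1) with hε
  have hε0 : 0 < ε := by positivity
  set s₂ : ℝ := s₁ + η₀ with hs₂
  have hs₂δ : s₂ + η₀ = δ := by rw [hs₂, hη₀]; ring
  set G₁ : ℝ := ε * (4 / η₀ ^ 2) with hG₁
  have hG₁0 : 0 < G₁ := by positivity
  set G₂ : ℝ := CN / ε with hG₂
  have hG₂0 : 0 < G₂ := by positivity
  clear_value v W Z L η₀ ε s₂ G₁ G₂
  refine ⟨G₁ + G₂ + 1, by positivity, ?_⟩
  intro x t ht
  set E : ℕ → ℝ≥0∞ := fun n =>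
    ({y : SigmaPlus T | (shift T)^[n + 1] y = x ∧
        birkhoff T f (n + 1) y ≤ t}.encard : ℝ≥0∞) with hE
  have hEdef : ∀ n : ℕ, ({y : SigmaPlus T | (shift T)^[n + 1] y = x ∧
      birkhoff T f (n + 1) y ≤ t}.encard : ℝ≥0∞) = E n := fun n => rfl
  have hPartII' : ∑' n : ℕ, E n ≤ ENNReal.ofReal (CN * Real.exp (δ * t)) := by
    have := hPartII x t ht
    simpa only [hEdef] using this
  simp only [hEdef]
  set m₁ : ℕ := ⌊ε * t⌋₊ with hm₁
  have hεt0 : 0 < ε * t := by positivity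
  have hm₁le : (m₁ : ℝ) ≤ ε * t := by rw [hm₁]; exact Nat.floor_le hεt0.le
  have hm₁lt : ε * t < (m₁ : ℝ) + 1 := by rw [hm₁]; exact Nat.lt_floor_add_one (ε * t)
  clear_value m₁
  -- small n: Chernoff bound
  have hsmall : ∀ n : ℕ, n < m₁ → E n ≤ ENNReal.ofReal (Real.exp (s₂ * t)) := by
    intro n hn
    have hch := chernoff_count hC hα hc0 hc hs₁0 hsum hhold x t (n + 1)
    rw [← hW] at hch
    rw [← hv] at hch
    have hn1 : ((n : ℝ) + 1) ≤ ε * t := by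
      have h1 : (n + 1 : ℕ) ≤ m₁ := hn
      have h2 : ((n + 1 : ℕ) : ℝ) ≤ (m₁ : ℝ) := by exact_mod_cast h1
      have h3 : (m₁ : ℝ) ≤ ε * t := hm₁le
      push_cast at h2
      linarith only [h2, h3]
    have hreal : Real.exp (s₁ * (t + ((n : ℝ) + 1) * v)) * Z ^ (n + 1)
        ≤ Real.exp (s₂ * t) := by
      have hZpow : (Z : ℝ) ^ (n + 1) = Real.exp (((n : ℝ) + 1) * Real.log Z) := by
        rw [show ((n : ℝ) + 1) = ((n + 1 : ℕ) : ℝ) by push_cast; ring]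
        rw [Real.exp_nat_mul, Real.exp_log hZ0]
      rw [hZpow, ← Real.exp_add]
      apply Real.exp_le_exp.mpr
      have hexp : s₁ * (t + ((n : ℝ) + 1) * v) + ((n : ℝ) + 1) * Real.log Z
          = s₁ * t + ((n : ℝ) + 1) * L := by
        rw [hL]; ring
      rw [hexp, hs₂]
      have h4 : ((n : ℝ) + 1) * L ≤ ε * t * L :=
        mul_le_mul_of_nonneg_right hn1 hL0
      have h5 : ε * t * L ≤ η₀ * t := by
        rw [hε, div_mul_eq_mul_div, div_mul_eq_mul_div,
          div_le_iff₀ (by linarith only [hL0])]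
        linarith only [mul_nonneg hη₀0.le ht.le]
      linarith only [h4, h5]
    calc E n ≤ ENNReal.ofReal (Real.exp (s₁ * (t + ((n : ℝ) + 1) * v))) * W ^ (n + 1) := by
          rw [hE]
          convert hch using 4
          push_cast
          ring
      _ ≤ ENNReal.ofReal (Real.exp (s₁ * (t + ((n : ℝ) + 1) * v)))
            * (ENNReal.ofReal Z) ^ (n + 1) := by gcongr
      _ = ENNReal.ofReal (Real.exp (s₁ * (t + ((n : ℝ) + 1) * v)) * Z ^ (n + 1)) := by
          rw [← ENNReal.ofReal_pow hZ0.le, ← ENNReal.ofReal_mul (by positivity)]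
      _ ≤ ENNReal.ofReal (Real.exp (s₂ * t)) := ENNReal.ofReal_le_ofReal hreal
  -- pointwise splitting
  have hpt : ∀ n : ℕ, ((n : ℝ≥0∞) + 1)⁻¹ * E n
      ≤ (if n < m₁ then ENNReal.ofReal (Real.exp (s₂ * t)) else 0)
        + (if n < m₁ then 0 else (ENNReal.ofReal (ε * t))⁻¹ * E n) := by
    intro n
    by_cases hn : n < m₁
    · simp only [hn, if_true]
      rw [add_zero]
      calc ((n : ℝ≥0∞) + 1)⁻¹ * E n ≤ 1 * E n := by
            gcongr
            exact ENNReal.inv_le_one.mpr le_add_self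
        _ = E n := one_mul _
        _ ≤ _ := hsmall n hn
    · simp only [hn, if_false]
      rw [zero_add]
      gcongr
      have hm : (m₁ : ℕ) ≤ n := Nat.le_of_not_lt hn
      have h1 : ε * t ≤ (n : ℝ) + 1 := by
        have h2 : ((m₁ : ℕ) : ℝ) ≤ (n : ℝ) := by exact_mod_cast hm
        linarith
      calc ENNReal.ofReal (ε * t) ≤ ENNReal.ofReal ((n : ℝ) + 1) :=
            ENNReal.ofReal_le_ofReal h1
        _ = (n : ℝ≥0∞) + 1 := by
            rw [ENNReal.ofReal_add (by positivity) one_pos.le,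
              ENNReal.ofReal_natCast, ENNReal.ofReal_one]
  -- the two real key estimates
  have hq : t ^ 2 ≤ 4 / η₀ ^ 2 * Real.exp (η₀ * t) := by
    have h1 : η₀ * t / 2 + 1 ≤ Real.exp (η₀ * t / 2) := by
      linarith only [Real.add_one_le_exp (η₀ * t / 2)]
    have h0 : 0 ≤ η₀ * t / 2 := by positivity
    have h2 : (η₀ * t / 2) ^ 2 ≤ Real.exp (η₀ * t / 2) ^ 2 :=
      pow_le_pow_left₀ h0 (by linarith only [h1]) 2
    have h3 : Real.exp (η₀ * t / 2) ^ 2 = Real.exp (η₀ * t) := by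
      rw [sq, ← Real.exp_add]
      congr 1
      ring
    rw [h3] at h2
    have h4 : η₀ ^ 2 * t ^ 2 / 4 ≤ Real.exp (η₀ * t) := by linarith only [h2]
    rw [div_mul_eq_mul_div, le_div_iff₀ (by positivity)]
    linarith only [h4]
  have hkey1 : ε * t * Real.exp (s₂ * t) ≤ G₁ * Real.exp (t * δ) / t := by
    rw [le_div_iff₀ ht]
    have hsplit : Real.exp (t * δ) = Real.exp (s₂ * t) * Real.exp (η₀ * t) := by
      rw [← Real.exp_add]
      congr 1
      rw [← hs₂δ]
      ring
    rw [hsplit, hG₁]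
    have h5 : t ^ 2 * Real.exp (s₂ * t)
        ≤ (4 / η₀ ^ 2 * Real.exp (η₀ * t)) * Real.exp (s₂ * t) :=
      mul_le_mul_of_nonneg_right hq (Real.exp_pos _).le
    linarith only [mul_le_mul_of_nonneg_left h5 hε0.le]
  have hkey2 : (ε * t)⁻¹ * (CN * Real.exp (δ * t)) = G₂ * Real.exp (t * δ) / t := by
    rw [hG₂, mul_comm δ t]
    field_simp
    try ring
  -- assemble
  calc ∑' n : ℕ, ((n : ℝ≥0∞) + 1)⁻¹ * E n
      ≤ ∑' n : ℕ, ((if n < m₁ then ENNReal.ofReal (Real.exp (s₂ * t)) else 0)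
          + (if n < m₁ then 0 else (ENNReal.ofReal (ε * t))⁻¹ * E n)) :=
        ENNReal.tsum_le_tsum hpt
    _ = (∑' n : ℕ, (if n < m₁ then ENNReal.ofReal (Real.exp (s₂ * t)) else 0))
          + ∑' n : ℕ, (if n < m₁ then 0 else (ENNReal.ofReal (ε * t))⁻¹ * E n) :=
        ENNReal.tsum_add
    _ ≤ ENNReal.ofReal (G₁ * Real.exp (t * δ) / t)
          + ENNReal.ofReal (G₂ * Real.exp (t * δ) / t) := by
        refine add_le_add ?_ ?_
        · -- small-n part
          have hts : ∑' n : ℕ, (if n < m₁ then ENNReal.ofReal (Real.exp (s₂ * t)) else 0)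
              = ∑ n ∈ Finset.range m₁, (if n < m₁ then ENNReal.ofReal (Real.exp (s₂ * t)) else 0) := by
            refine tsum_eq_sum ?_
            intro n hn
            rw [Finset.mem_range] at hn
            simp [hn]
          rw [hts]
          have : ∑ n ∈ Finset.range m₁, (if n < m₁ then ENNReal.ofReal (Real.exp (s₂ * t)) else 0)
              = (m₁ : ℝ≥0∞) * ENNReal.ofReal (Real.exp (s₂ * t)) := by
            have he : ∀ n ∈ Finset.range m₁,
                (if n < m₁ then ENNReal.ofReal (Real.exp (s₂ * t)) else 0)
                  = ENNReal.ofReal (Real.exp (s₂ * t)) := by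
              intro n hn
              rw [Finset.mem_range] at hn
              simp [hn]
            rw [Finset.sum_congr rfl he, Finset.sum_const, Finset.card_range,
              nsmul_eq_mul]
          rw [this]
          calc (m₁ : ℝ≥0∞) * ENNReal.ofReal (Real.exp (s₂ * t))
              ≤ ENNReal.ofReal (ε * t) * ENNReal.ofReal (Real.exp (s₂ * t)) := by
                gcongr
                rw [← ENNReal.ofReal_natCast m₁]
                exact ENNReal.ofReal_le_ofReal hm₁le
            _ = ENNReal.ofReal (ε * t * Real.exp (s₂ * t)) :=
                (ENNReal.ofReal_mul hεt0.le).symm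
            _ ≤ _ := ENNReal.ofReal_le_ofReal hkey1
        · -- large-n part
          calc ∑' n : ℕ, (if n < m₁ then 0 else (ENNReal.ofReal (ε * t))⁻¹ * E n)
              ≤ ∑' n : ℕ, (ENNReal.ofReal (ε * t))⁻¹ * E n := by
                refine ENNReal.tsum_le_tsum (fun n => ?_)
                by_cases hn : n < m₁ <;> simp [hn]
            _ = (ENNReal.ofReal (ε * t))⁻¹ * ∑' n : ℕ, E n := ENNReal.tsum_mul_left
            _ ≤ (ENNReal.ofReal (ε * t))⁻¹ * ENNReal.ofReal (CN * Real.exp (δ * t)) := by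
                gcongr
            _ = ENNReal.ofReal ((ε * t)⁻¹) * ENNReal.ofReal (CN * Real.exp (δ * t)) := by
                rw [ENNReal.ofReal_inv_of_pos hεt0]
            _ = ENNReal.ofReal ((ε * t)⁻¹ * (CN * Real.exp (δ * t))) :=
                (ENNReal.ofReal_mul (by positivity)).symm
            _ = ENNReal.ofReal (G₂ * Real.exp (t * δ) / t) := by rw [hkey2]
    _ = ENNReal.ofReal ((G₁ + G₂) * Real.exp (t * δ) / t) := by
        rw [← ENNReal.ofReal_add (by positivity) (by positivity)]
        congr 1
        ring
    _ ≤ ENNReal.ofReal ((G₁ + G₂ + 1) * Real.exp (t * δ) / t) := by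
        refine ENNReal.ofReal_le_ofReal ?_
        have hx0 : 0 < Real.exp (t * δ) := Real.exp_pos _
        rw [div_le_div_iff₀ ht ht]
        linarith only [mul_pos hx0 ht]

end CMS
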